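/- Let N be a nonnegative-integer-valued random variable with cumulant sequence {g_k} and let X be a d-dimensional random vector with cumulant sequence {c_i} (i ∈ ℕ_0^d). Then the i-th cumulant h_i of the random sum S_N = X_1 + ⋯ + X_N of i.i.d. copies of X (independent of N) satisfies h_i = i! ∑_{λ ⊢ i} g_{ℓ(λ)} / (m(λ)! λ!) ∏_j c_{λ_j}^{r_j}, where the sum is over all multi-index partitions λ of i. -/

import Mathlib

open scoped BigOperators

noncomputable section

/-- Multi-indices in `d` variables. -/
abbrev MIdx (d : ℕ) := Fin d →₀ ℕ

/-- `i! = i₁! ⋯ i_d!` for a multi-index. -/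
def mifact {d : ℕ} (i : MIdx d) : ℕ := ∏ k, (i k).factorial

/-- `λ!`: the product of the factorials of all entries of all parts of `λ`. -/
def partFact {d : ℕ} (l : Multiset (MIdx d)) : ℕ := (l.map mifact).prod

/-- `m(λ)! = r₁! r₂! ⋯`: the product of the factorials of the multiplicities of the
distinct parts of `λ`. -/
def multFact {d : ℕ} (l : Multiset (MIdx d)) : ℕ :=
  ∏ x ∈ l.toFinset, (l.count x).factorial

/-- `λ ⊢ i`: a partition of the multi-index `i` is a multiset of nonzero multi-indices
(the columns of the matrix) summing to `i`. -/
def IsMPartition {d : ℕ} (l : Multiset (MIdx d)) (i : MIdx d) : Prop :=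
  (∀ x ∈ l, x ≠ 0) ∧ l.sum = i

/-- The (multivariate) cumulant generating (formal power) series `∑_{i>0} c_i z^i/i!`
of a cumulant sequence `c`. -/
def Kof {d : ℕ} (c : MIdx d → ℝ) : MvPowerSeries (Fin d) ℝ :=
  fun i => if i = 0 then 0 else c i / (mifact i : ℝ)

/-- The total degree `|i|` of a multi-index. -/
def degB {d : ℕ} (i : MIdx d) : ℕ := i.sum fun _ m => m

section Aux

variable {d : ℕ}

lemma multFact_pos (l : Multiset (MIdx d)) : 0 < multFact l :=
  Finset.prod_pos fun _ _ => Nat.factorial_pos _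

lemma mifact_pos (i : MIdx d) : 0 < mifact i :=
  Finset.prod_pos fun _ _ => Nat.factorial_pos _

lemma partFact_pos (l : Multiset (MIdx d)) : 0 < partFact l := by
  unfold partFact
  refine CanonicallyOrderedAdd.multiset_prod_pos.2 fun x hx => ?_
  obtain ⟨y, -, rfl⟩ := Multiset.mem_map.1 hx
  exact mifact_pos y

lemma multFact_erase {m : Multiset (MIdx d)} {u : MIdx d} (hu : u ∈ m) :
    multFact m = m.count u * multFact (m.erase u) := by
  classical
  have hsub : (m.erase u).toFinset ⊆ m.toFinset := by
    intro x hx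
    rw [Multiset.mem_toFinset] at hx ⊢
    exact Multiset.mem_of_mem_erase hx
  have h1 : multFact (m.erase u) = ∏ x ∈ m.toFinset, ((m.erase u).count x).factorial := by
    unfold multFact
    exact Finset.prod_subset hsub fun x _ hx => by
      rw [Multiset.mem_toFinset] at hx
      rw [Multiset.count_eq_zero_of_notMem hx, Nat.factorial_zero]
  have humem : u ∈ m.toFinset := Multiset.mem_toFinset.2 hu
  rw [h1, multFact, ← Finset.mul_prod_erase _ _ humem, ← Finset.mul_prod_erase _ _ humem,
    Multiset.count_erase_self, ← mul_assoc,
    Nat.mul_factorial_pred (Multiset.count_pos.2 hu).ne']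
  congr 1
  refine Finset.prod_congr rfl fun x hx => ?_
  rw [Multiset.count_erase_of_ne (Finset.mem_erase.1 hx).1]

lemma degB_add (a b : MIdx d) : degB (a + b) = degB a + degB b := by
  unfold degB
  exact Finsupp.sum_add_index' (fun _ => rfl) (fun _ _ _ => rfl)

lemma one_le_degB {x : MIdx d} (hx : x ≠ 0) : 1 ≤ degB x := by
  obtain ⟨a, ha⟩ : ∃ a, x a ≠ 0 := by
    by_contra hc
    push_neg at hc
    exact hx (Finsupp.ext fun a => hc a)
  calc 1 ≤ x a := Nat.one_le_iff_ne_zero.2 ha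
    _ ≤ degB x := Finset.single_le_sum (f := fun a => x a)
        (fun _ _ => Nat.zero_le _) (Finsupp.mem_support_iff.2 ha)

lemma card_le_degB {m : Multiset (MIdx d)} (hm : ∀ x ∈ m, x ≠ 0) :
    Multiset.card m ≤ degB m.sum := by
  induction m using Multiset.induction with
  | empty => simp [degB]
  | cons a s ih =>
      rw [Multiset.card_cons, Multiset.sum_cons, degB_add]
      have h1 := one_le_degB (hm a (Multiset.mem_cons_self a s))
      have h2 := ih fun x hx => hm x (Multiset.mem_cons_of_mem hx)
      omega

/-- The finset of partitions of `i` with exactly `k` parts. -/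
def Qset (k : ℕ) (i : MIdx d) : Finset (Multiset (MIdx d)) :=
  ((Finset.finsuppAntidiag (Finset.range k) i).filter
    (fun l => ∀ j ∈ Finset.range k, l j ≠ 0)).image
    (fun l : ℕ →₀ MIdx d => (Finset.range k).val.map (l : ℕ → MIdx d))

lemma mem_Qset {k : ℕ} {i : MIdx d} {m : Multiset (MIdx d)} :
    m ∈ Qset k i ↔ Multiset.card m = k ∧ (∀ x ∈ m, x ≠ 0) ∧ m.sum = i := by
  constructor
  · rintro hm
    obtain ⟨l, hl, rfl⟩ := Finset.mem_image.1 hm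
    rw [Finset.mem_filter, Finset.mem_finsuppAntidiag] at hl
    obtain ⟨⟨hsum, -⟩, hne⟩ := hl
    refine ⟨by simp, ?_, ?_⟩
    · intro x hx
      obtain ⟨j, hj, rfl⟩ := Multiset.mem_map.1 hx
      exact hne j hj
    · rw [← hsum]; rfl
  · rintro ⟨hcard, hne, hsum⟩
    classical
    set L := m.toList with hLdef
    have hLlen : L.length = k := by rw [hLdef, Multiset.length_toList, hcard]
    have hLm : (L : Multiset (MIdx d)) = m := Multiset.coe_toList m
    set l : ℕ →₀ MIdx d := Finsupp.onFinset (Finset.range k)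
      (fun j => L.getD j 0)
      (fun j hj => by
        rw [Finset.mem_range]
        by_contra hc
        exact hj (List.getD_eq_default _ _ (hLlen ▸ Nat.le_of_not_lt hc))) with hldef
    have hlapp : ∀ j, l j = L.getD j 0 := fun j => rfl
    have hmap : (Finset.range k).val.map l = m := by
      have : (Finset.range k).val = (List.range k : List ℕ) := by
        rw [Finset.range_val]; rfl
      rw [this, Multiset.map_coe, ← hLm]
      congr 1
      refine List.ext_getElem (by simp [hLlen]) fun j h1 h2 => ?_
      simp only [List.getElem_map, List.getElem_range]
      rw [hlapp, List.getD_eq_getElem _ _ (by omega)]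
    refine Finset.mem_image.2 ⟨l, ?_, hmap⟩
    rw [Finset.mem_filter, Finset.mem_finsuppAntidiag]
    refine ⟨⟨?_, Finsupp.support_onFinset_subset⟩, ?_⟩
    · show ∑ j ∈ Finset.range k, l j = i
      rw [← hsum, ← hmap]; rfl
    · intro j hj
      rw [Finset.mem_range] at hj
      rw [hlapp, List.getD_eq_getElem _ _ (by omega)]
      exact hne _ (Multiset.mem_toList.1 (List.getElem_mem _))

lemma coeff_pow_eq (f : MvPowerSeries (Fin d) ℝ)
    (hf : MvPowerSeries.constantCoeff f = 0) (k : ℕ) (i : MIdx d) :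
    MvPowerSeries.coeff i (f ^ k) =
      ∑ m ∈ Qset k i, ((k.factorial : ℝ) / (multFact m : ℝ)) *
        ((m.map fun e => MvPowerSeries.coeff e f).prod) := by
  classical
  induction k generalizing i with
  | zero =>
      rw [pow_zero, MvPowerSeries.coeff_one]
      by_cases hi : i = 0
      · subst hi
        have : Qset (d := d) 0 0 = {0} := by
          ext m
          simp [mem_Qset, Multiset.card_eq_zero]
          rintro rfl; simp
        rw [this]
        simp [multFact]
      · have : Qset (d := d) 0 i = ∅ := by
          ext m
          simp only [mem_Qset, Finset.notMem_empty, iff_false, not_and, Multiset.card_eq_zero]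
          rintro rfl -; simpa using Ne.symm hi
        simp [this, hi]
  | succ k ih =>
      rw [pow_succ', MvPowerSeries.coeff_mul]
      have hfil : ∑ p ∈ (Finset.HasAntidiagonal.antidiagonal i).filter (fun p : MIdx d × MIdx d => p.1 ≠ 0),
          MvPowerSeries.coeff p.1 f * MvPowerSeries.coeff p.2 (f ^ k)
          = ∑ p ∈ Finset.HasAntidiagonal.antidiagonal i,
            MvPowerSeries.coeff p.1 f * MvPowerSeries.coeff p.2 (f ^ k) := by
        refine Finset.sum_filter_of_ne fun p hp hval h0 => ?_
        exact hval (by rw [h0, MvPowerSeries.coeff_zero_eq_constantCoeff, hf, zero_mul])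
      rw [← hfil]
      have hih : ∀ p ∈ (Finset.HasAntidiagonal.antidiagonal i).filter (fun p : MIdx d × MIdx d => p.1 ≠ 0),
          MvPowerSeries.coeff p.1 f * MvPowerSeries.coeff p.2 (f ^ k) =
            ∑ m' ∈ Qset k p.2, MvPowerSeries.coeff p.1 f *
              (((k.factorial : ℝ) / (multFact m' : ℝ)) *
                ((m'.map fun e => MvPowerSeries.coeff e f).prod)) := by
        intro p _
        rw [ih, Finset.mul_sum]
      rw [Finset.sum_congr rfl hih, Finset.sum_sigma']
      -- now a sum over sigma type; group by the multiset p.1 ::ₘ m'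
      set S := ((Finset.HasAntidiagonal.antidiagonal i).filter (fun p : MIdx d × MIdx d => p.1 ≠ 0)).sigma
        (fun p => Qset k p.2) with hSdef
      have hmaps : ∀ x ∈ S, x.1.1 ::ₘ x.2 ∈ Qset (k + 1) i := by
        rintro ⟨⟨u, v⟩, m'⟩ hx
        rw [hSdef, Finset.mem_sigma, Finset.mem_filter, Finset.HasAntidiagonal.mem_antidiagonal] at hx
        obtain ⟨⟨huv, hu0⟩, hm'⟩ := hx
        rw [mem_Qset] at hm' ⊢
        obtain ⟨hc', hn', hs'⟩ := hm'
        refine ⟨by simp [hc'], ?_, ?_⟩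
        · intro x hx
          rcases Multiset.mem_cons.1 hx with rfl | hx
          · exact hu0
          · exact hn' x hx
        · rw [Multiset.sum_cons, hs', huv]
      rw [← Finset.sum_fiberwise_of_maps_to hmaps]
      refine Finset.sum_congr rfl fun m hm => ?_
      rw [mem_Qset] at hm
      obtain ⟨hcard, hne, hsum⟩ := hm
      -- the fiber over m is in bijection with m.toFinset
      have hbij : ∑ x ∈ S.filter (fun x => x.1.1 ::ₘ x.2 = m),
          MvPowerSeries.coeff x.1.1 f *
            (((k.factorial : ℝ) / (multFact x.2 : ℝ)) *
              ((x.2.map fun e => MvPowerSeries.coeff e f).prod)) =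
          ∑ u ∈ m.toFinset, MvPowerSeries.coeff u f *
            (((k.factorial : ℝ) / (multFact (m.erase u) : ℝ)) *
              (((m.erase u).map fun e => MvPowerSeries.coeff e f).prod)) := by
        refine Finset.sum_nbij' (fun x => x.1.1)
          (fun u => ⟨(u, i - u), m.erase u⟩) ?_ ?_ ?_ ?_ ?_
        · rintro ⟨⟨u, v⟩, m'⟩ hx
          rw [Finset.mem_filter] at hx
          exact Multiset.mem_toFinset.2 (hx.2 ▸ Multiset.mem_cons_self u m')
        · intro u hu
          rw [Multiset.mem_toFinset] at hu
          have herase : u + (m.erase u).sum = i := by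
            rw [← Multiset.sum_cons, Multiset.cons_erase hu, hsum]
          have hiu : i - u = (m.erase u).sum := by
            rw [← herase, add_tsub_cancel_left]
          rw [Finset.mem_filter]
          constructor
          · rw [hSdef, Finset.mem_sigma, Finset.mem_filter, Finset.HasAntidiagonal.mem_antidiagonal]
            refine ⟨⟨?_, hne u hu⟩, ?_⟩
            · show u + (i - u) = i
              rw [hiu]; exact herase
            · rw [mem_Qset]
              refine ⟨?_, fun x hx => hne x (Multiset.mem_of_mem_erase hx), hiu.symm⟩
              rw [Multiset.card_erase_of_mem hu, hcard]; rfl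
          · exact Multiset.cons_erase hu
        · rintro ⟨⟨u, v⟩, m'⟩ hx
          rw [Finset.mem_filter] at hx
          obtain ⟨hxS, hxm⟩ := hx
          rw [hSdef, Finset.mem_sigma, Finset.mem_filter, Finset.HasAntidiagonal.mem_antidiagonal] at hxS
          obtain ⟨⟨huv, -⟩, -⟩ := hxS
          have hv : v = i - u := by rw [← huv, add_tsub_cancel_left]
          have hm' : m.erase u = m' := by rw [← hxm, Multiset.erase_cons_head]
          simp only [hv, hm']
        · intro u hu; rfl
        · rintro ⟨⟨u, v⟩, m'⟩ hx
          rw [Finset.mem_filter] at hx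
          obtain ⟨-, hxm⟩ := hx
          have hm' : m.erase u = m' := by rw [← hxm, Multiset.erase_cons_head]
          rw [← hm']
      rw [hbij]
      -- now sum over distinct elements of m
      have hterm : ∀ u ∈ m.toFinset,
          MvPowerSeries.coeff u f *
            (((k.factorial : ℝ) / (multFact (m.erase u) : ℝ)) *
              (((m.erase u).map fun e => MvPowerSeries.coeff e f).prod)) =
          (m.count u : ℝ) * (((k.factorial : ℝ) / ((k + 1) * (multFact m : ℝ))) *
            ((m.map fun e => MvPowerSeries.coeff e f).prod) * ((k : ℝ) + 1)) := by
        intro u hu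
        rw [Multiset.mem_toFinset] at hu
        have hprod : (m.map fun e => MvPowerSeries.coeff e f).prod =
            MvPowerSeries.coeff u f *
              ((m.erase u).map fun e => MvPowerSeries.coeff e f).prod := by
          conv_lhs => rw [← Multiset.cons_erase hu]
          rw [Multiset.map_cons, Multiset.prod_cons]
        have hMF : (multFact m : ℝ) = (m.count u : ℝ) * (multFact (m.erase u) : ℝ) := by
          rw [← Nat.cast_mul, ← multFact_erase hu]
        have hMFe : (multFact (m.erase u) : ℝ) ≠ 0 :=
          Nat.cast_ne_zero.2 (multFact_pos _).ne'
        have hcount : (m.count u : ℝ) ≠ 0 :=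
          Nat.cast_ne_zero.2 (Multiset.count_pos.2 hu).ne'
        rw [hprod, hMF]
        field_simp
      rw [Finset.sum_congr rfl hterm, ← Finset.sum_mul]
      have hcnt : ∑ u ∈ m.toFinset, (m.count u : ℝ) = ((k : ℝ) + 1) := by
        rw [← Nat.cast_sum, Multiset.toFinset_sum_count_eq, hcard]
        push_cast; ring
      rw [hcnt]
      have hMF : (multFact m : ℝ) ≠ 0 := Nat.cast_ne_zero.2 (multFact_pos _).ne'
      have hk1 : ((k : ℝ) + 1) ≠ 0 := by positivity
      rw [Nat.factorial_succ]
      push_cast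
      field_simp

end Aux

/-- if `g` is the cumulant sequence of the integer-valued index `N`, `c` the
cumulant sequence of `X`, and `h` the cumulant sequence of the random sum `S_N`, i.e. the
coefficient sequence of the composition `K_N(K_X(z)) = ∑_{k≥1} g_k K_X(z)^k / k!`, then
`h_i = i! ∑_{λ ⊢ i} g_{ℓ(λ)}/(m(λ)! λ!) ∏_j c_{λ_j}^{r_j}`. -/
theorem cumulants_of_random_sum {d : ℕ} (g : ℕ → ℝ) (c : MIdx d → ℝ)
    (h : MIdx d → ℝ)
    (hh : ∀ i : MIdx d, h i = (mifact i : ℝ) *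
      MvPowerSeries.coeff i
        (∑ k ∈ Finset.Icc 1 (degB i), (g k / (k.factorial : ℝ)) • (Kof c) ^ k))
    (i : MIdx d) (hi : i ≠ 0)
    (P : Finset (Multiset (MIdx d)))
    (hP : ∀ l, l ∈ P ↔ IsMPartition l i) :
    h i = (mifact i : ℝ) * ∑ l ∈ P,
      g (Multiset.card l) / ((multFact l : ℝ) * (partFact l : ℝ)) * ((l.map c).prod) := by
  classical
  have hKconst : MvPowerSeries.constantCoeff (Kof c) = 0 := by
    show Kof c 0 = 0
    simp [Kof]
  rw [hh i]
  congr 1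
  rw [map_sum]
  have hco : ∀ k ∈ Finset.Icc 1 (degB i),
      MvPowerSeries.coeff i ((g k / (k.factorial : ℝ)) • (Kof c) ^ k) =
        ∑ m ∈ P.filter (fun m => Multiset.card m = k),
          g (Multiset.card m) / ((multFact m : ℝ) * (partFact m : ℝ)) * ((m.map c).prod) := by
    intro k hk
    rw [LinearMap.map_smul, smul_eq_mul, coeff_pow_eq _ hKconst]
    have hQP : Qset k i = P.filter (fun m => Multiset.card m = k) := by
      ext m
      rw [mem_Qset, Finset.mem_filter, hP, IsMPartition]
      tauto
    rw [hQP, Finset.mul_sum]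
    refine Finset.sum_congr rfl fun m hm => ?_
    rw [Finset.mem_filter, hP, IsMPartition] at hm
    obtain ⟨⟨hne, hsum⟩, hcard⟩ := hm
    have hcoeffs : (m.map fun e => MvPowerSeries.coeff e (Kof c)).prod =
        (m.map fun e => c e * ((mifact e : ℝ))⁻¹).prod := by
      congr 1
      refine Multiset.map_congr rfl fun x hx => ?_
      show Kof c x = _
      rw [Kof, if_neg (hne x hx), div_eq_mul_inv]
    have hpfc : (partFact m : ℝ) = (m.map fun e => (mifact e : ℝ)).prod := by
      rw [partFact, Nat.cast_multiset_prod, Multiset.map_map]; rfl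
    have hsplit : (m.map fun e => c e * ((mifact e : ℝ))⁻¹).prod =
        (m.map c).prod * ((partFact m : ℝ))⁻¹ := by
      rw [Multiset.prod_map_mul, hpfc, Multiset.prod_map_inv]
    have hpf : (partFact m : ℝ) ≠ 0 := Nat.cast_ne_zero.2 (partFact_pos _).ne'
    have hmf : (multFact m : ℝ) ≠ 0 := Nat.cast_ne_zero.2 (multFact_pos _).ne'
    have hkf : ((k.factorial : ℝ)) ≠ 0 := Nat.cast_ne_zero.2 (Nat.factorial_pos _).ne'
    rw [hcoeffs, hsplit, hcard]
    field_simp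
  rw [Finset.sum_congr rfl hco]
  refine Finset.sum_fiberwise_of_maps_to (fun m hm => ?_) _
  rw [hP, IsMPartition] at hm
  obtain ⟨hne, hsum⟩ := hm
  rw [Finset.mem_Icc]
  constructor
  · rw [Nat.one_le_iff_ne_zero]
    intro hc
    rw [Multiset.card_eq_zero] at hc
    subst hc
    exact hi (by rw [← hsum]; rfl)
  · calc Multiset.card m ≤ degB m.sum := card_le_degB hne
      _ = degB i := by rw [hsum]
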